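/- On the complete graph K_n, if f is a configuration for which some permutation alpha of {1,...,n} satisfies f_{alpha(i)} = i - 1 for i = 1, ..., n-1, then rho(f) = -1 if f_{alpha(n)} < 0 and rho(f) = f_{alpha(n)} otherwise. -/

import Mathlib

/-- Laplacian configuration `Δ^(i)` of the multigraph given by edge-multiplicity matrix `e`. -/
def lapG {n : ℕ} (e : Fin n → Fin n → ℕ) (i : Fin n) : Fin n → ℤ :=
  fun j => if j = i then (∑ k, (e i k : ℤ)) else -(e i j : ℤ)

/-- Toppling equivalence: `f - g` lies in the lattice generated by the `Δ^(i)`. -/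
def topG {n : ℕ} (e : Fin n → Fin n → ℕ) (f g : Fin n → ℤ) : Prop :=
  ∃ a : Fin n → ℤ, f - g = ∑ i, a i • lapG e i

/-- `L_G`-effectiveness: toppling equivalent to a nonnegative configuration. -/
def effG {n : ℕ} (e : Fin n → Fin n → ℕ) (f : Fin n → ℤ) : Prop :=
  ∃ g : Fin n → ℤ, topG e f g ∧ ∀ i, 0 ≤ g i

/-- The Baker–Norine rank:
`rankG e f + 1 = min {deg λ | λ ≥ 0, f - λ not L_G-effective}`. -/
noncomputable def rankG {n : ℕ} (e : Fin n → Fin n → ℕ) (f : Fin n → ℤ) : ℤ :=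
  sInf {d : ℤ | ∃ lam : Fin n → ℤ,
    (∀ i, 0 ≤ lam i) ∧ (∑ i, lam i) = d ∧ ¬ effG e (f - lam)} - 1

/-- Edge multiplicities of the complete graph `K n`. -/
def eK (n : ℕ) : Fin n → Fin n → ℕ := fun i j => if i = j then 0 else 1

/-- Parking configuration on `K n` (with sink `n`, the last vertex). -/
def parkingK {n : ℕ} (f : Fin n → ℤ) : Prop :=
  (∀ i : Fin n, (i : ℕ) < n - 1 → 0 ≤ f i) ∧
    ∀ Y : Finset (Fin n), Y.Nonempty → (∀ i ∈ Y, (i : ℕ) < n - 1) →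
      ∃ k ∈ Y, f k < (n : ℤ) - (Y.card : ℤ)

/-! ### Auxiliary lemmas -/

lemma sumG {n : ℕ} (hn : 0 < n) (x : ℤ) :
    ∑ c ∈ Finset.range n, (x + (c : ℤ)) / (n : ℤ) = x := by
  have hn' : (0:ℤ) < (n:ℤ) := by exact_mod_cast hn
  have step : ∀ y : ℤ,
      ∑ c ∈ Finset.range n, (y + 1 + (c : ℤ)) / (n : ℤ)
        = ∑ c ∈ Finset.range n, (y + (c : ℤ)) / (n : ℤ) + 1 := by
    intro y
    have h1 : ∑ c ∈ Finset.range n, (y + 1 + (c : ℤ)) / (n : ℤ)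
        = ∑ c ∈ Finset.range n, (y + ((c + 1 : ℕ) : ℤ)) / (n : ℤ) := by
      refine Finset.sum_congr rfl fun c _ => ?_
      push_cast; ring_nf
    have h2 : ∑ c ∈ Finset.range (n + 1), (y + (c : ℤ)) / (n : ℤ)
        = ∑ c ∈ Finset.range n, (y + ((c + 1 : ℕ) : ℤ)) / (n : ℤ) + (y + (0:ℤ)) / (n : ℤ) := by
      simpa using Finset.sum_range_succ' (fun c : ℕ => (y + (c : ℤ)) / (n : ℤ)) n
    have h3 : ∑ c ∈ Finset.range (n + 1), (y + (c : ℤ)) / (n : ℤ)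
        = ∑ c ∈ Finset.range n, (y + (c : ℤ)) / (n : ℤ) + (y + (n : ℤ)) / (n : ℤ) :=
      Finset.sum_range_succ _ n
    have h4 : (y + (n : ℤ)) / (n : ℤ) = y / (n : ℤ) + 1 := by
      have := Int.add_mul_ediv_right y 1 (c := (n:ℤ)) (by omega)
      simpa using this
    have h5 : (y + (0:ℤ)) / (n:ℤ) = y / (n:ℤ) := by rw [add_zero]
    omega
  induction x using Int.induction_on with
  | zero =>
    refine Finset.sum_eq_zero fun c hc => ?_
    rw [zero_add]
    exact Int.ediv_eq_zero_of_lt (by positivity) (by exact_mod_cast Finset.mem_range.mp hc)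
  | succ k ih => rw [step]; omega
  | pred k ih =>
    have := step (-(k:ℤ) - 1)
    have he : (-(k:ℤ) - 1 + 1) = -(k:ℤ) := by ring
    rw [he] at this
    omega

lemma lap_sum {n : ℕ} (a : Fin n → ℤ) (j : Fin n) :
    (∑ i, a i • lapG (eK n) i) j = (n : ℤ) * a j - ∑ i, a i := by
  have key : ∀ i : Fin n, (∑ k, ((eK n i k : ℕ) : ℤ)) = (n : ℤ) - 1 := by
    intro i
    have h1 : ∀ k : Fin n, ((eK n i k : ℕ) : ℤ) = 1 - (if i = k then (1:ℤ) else 0) := by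
      intro k; simp only [eK]; split <;> simp
    rw [Finset.sum_congr rfl fun k _ => h1 k, Finset.sum_sub_distrib, Finset.sum_const,
      Finset.sum_ite_eq]
    simp [mul_comm]
  have hval : ∀ i : Fin n, a i • lapG (eK n) i j
      = (if i = j then (n:ℤ) * a i else 0) - a i := by
    intro i
    simp only [smul_eq_mul, lapG]
    by_cases h : i = j
    · subst h; rw [if_pos rfl, if_pos rfl, key i]; ring
    · rw [if_neg h, if_neg (fun hh => h hh.symm)]
      have : (eK n i j : ℤ) = 1 := by simp [eK, fun hh => h hh]
      rw [this]; ring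
  rw [Finset.sum_apply]
  simp only [Pi.smul_apply]
  rw [Finset.sum_congr rfl fun i _ => hval i, Finset.sum_sub_distrib, Finset.sum_ite_eq']
  simp

lemma eff_iff {n : ℕ} (hn : 0 < n) (f : Fin n → ℤ) :
    effG (eK n) f ↔ ∃ c : ℤ, c ≤ ∑ j, (f j + c) / (n : ℤ) := by
  have hn' : (0:ℤ) < (n:ℤ) := by exact_mod_cast hn
  constructor
  · rintro ⟨g, ⟨a, ha⟩, hg⟩
    refine ⟨∑ i, a i, ?_⟩
    have hj : ∀ j, a j ≤ (f j + ∑ i, a i) / (n : ℤ) := by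
      intro j
      rw [Int.le_ediv_iff_mul_le hn']
      have h1 := congrFun ha j
      rw [Pi.sub_apply, lap_sum] at h1
      have h2 := hg j
      have h3 : a j * (n:ℤ) = (n:ℤ) * a j := mul_comm _ _
      linarith
    exact Finset.sum_le_sum fun j _ => hj j
  · rintro ⟨c, hc⟩
    set b : Fin n → ℤ := fun j => (f j + c) / (n : ℤ) with hb
    set S : ℤ := ∑ j, b j with hS
    have j0 : Fin n := ⟨0, hn⟩
    set a : Fin n → ℤ := fun j => b j - (if j = j0 then S - c else 0) with haa
    have hsa : ∑ i, a i = c := by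
      rw [haa]
      rw [Finset.sum_sub_distrib, Finset.sum_ite_eq']
      simp [hS]
    have hna : ∀ j, (n:ℤ) * a j ≤ f j + c := by
      intro j
      have h1 : (n:ℤ) * b j ≤ f j + c := by
        show (n:ℤ) * ((f j + c) / (n:ℤ)) ≤ f j + c
        have hm := Int.mul_ediv_add_emod (f j + c) (n:ℤ)
        have hr : 0 ≤ (f j + c) % (n:ℤ) := Int.emod_nonneg _ (by omega)
        omega
      have h2 : a j ≤ b j := by simp only [haa]; split <;> omega
      nlinarith
    refine ⟨fun j => f j - ((n:ℤ) * a j - c), ⟨a, ?_⟩, fun j => by have := hna j; simp; omega⟩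
    funext j
    rw [Pi.sub_apply, lap_sum, hsa]
    ring

lemma eff_of_deg {n : ℕ} (hn : 2 ≤ n) (f : Fin n → ℤ)
    (h : ((n:ℤ) - 1) * ((n:ℤ) - 2) ≤ 2 * ∑ j, f j) : effG (eK n) f := by
  rw [eff_iff (by omega) f]
  by_contra hno
  push_neg at hno
  have key : ∑ c ∈ Finset.range n, (∑ j, (f j + (c:ℤ)) / (n:ℤ)) = ∑ j, f j := by
    rw [Finset.sum_comm]
    exact Finset.sum_congr rfl fun j _ => sumG (by omega) (f j)
  have hb : ∑ c ∈ Finset.range n, (∑ j, (f j + (c:ℤ)) / (n:ℤ))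
      ≤ ∑ c ∈ Finset.range n, ((c:ℤ) - 1) := by
    refine Finset.sum_le_sum fun c _ => ?_
    have := hno (c:ℤ)
    omega
  have gauss : (∑ c ∈ Finset.range n, (c:ℤ)) * 2 = (n:ℤ) * ((n:ℤ) - 1) := by
    have h0 := congrArg (Nat.cast : ℕ → ℤ) (Finset.sum_range_id_mul_two n)
    push_cast [Nat.cast_sub (by omega : 1 ≤ n)] at h0
    convert h0 using 2
  have hsum : ∑ c ∈ Finset.range n, ((c:ℤ) - 1)
      = (∑ c ∈ Finset.range n, (c:ℤ)) - n := by
    rw [Finset.sum_sub_distrib]; simp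
  have hexp : ((n:ℤ) - 1) * ((n:ℤ) - 2) = (n:ℤ) * ((n:ℤ) - 1) - 2 * (n:ℤ) + 2 := by ring
  rw [key, hsum] at hb
  omega

lemma noneff {n : ℕ} (hn : 2 ≤ n) (f : Fin n → ℤ) (α : Equiv.Perm (Fin n))
    (hα : ∀ i : Fin n, (i : ℕ) < n - 1 → f (α i) = ((i : ℕ) : ℤ))
    (hlast : f (α ⟨n - 1, Nat.sub_lt (by omega) one_pos⟩) ≤ -1) : ¬ effG (eK n) f := by
  rw [eff_iff (by omega)]
  push_neg
  intro c
  obtain ⟨m, rfl⟩ : ∃ m, n = m + 1 := ⟨n - 1, by omega⟩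
  have hm : 1 ≤ m := by omega
  set N : ℤ := ((m + 1 : ℕ) : ℤ) with hN
  have hre : ∑ j, (f j + c) / N = ∑ i, (f (α i) + c) / N :=
    (Equiv.sum_comp α (fun j => (f j + c) / N)).symm
  rw [hre, Fin.sum_univ_castSucc]
  have hlast' : f (α (Fin.last m)) ≤ -1 := by
    have : (Fin.last m) = (⟨m + 1 - 1, by omega⟩ : Fin (m+1)) := by
      apply Fin.ext; simp
    rw [this]; exact hlast
  have h1 : ∀ i : Fin m, (f (α i.castSucc) + c) / N = (c - 1 + ((i:ℕ) + 1 : ℤ)) / N := by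
    intro i
    rw [hα i.castSucc (by have := i.isLt; simp only [Fin.coe_castSucc]; omega)]
    norm_num [Fin.coe_castSucc]
    ring_nf
  have h2 : (f (α (Fin.last m)) + c) / N ≤ (c - 1 + ((0:ℕ) : ℤ)) / N := by
    apply Int.ediv_le_ediv (by rw [hN]; exact_mod_cast Nat.succ_pos m)
    push_cast; omega
  have hG := sumG (n := m + 1) (by omega) (c - 1)
  rw [Finset.sum_range_succ'] at hG
  have h3 : ∑ i : Fin m, (f (α i.castSucc) + c) / N
      = ∑ k ∈ Finset.range m, (c - 1 + ((k:ℕ) + 1 : ℤ)) / N := by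
    rw [Finset.sum_congr rfl fun i _ => h1 i]
    exact Fin.sum_univ_eq_sum_range (fun k => (c - 1 + ((k:ℕ) + 1 : ℤ)) / N) m
  have h4 : ∑ k ∈ Finset.range m, (c - 1 + ((k:ℕ) + 1 : ℤ)) / N
      = ∑ k ∈ Finset.range m, (c - 1 + ((k + 1 : ℕ) : ℤ)) / N := by
    refine Finset.sum_congr rfl fun k _ => ?_
    push_cast; ring_nf
  calc ∑ i : Fin m, (f (α i.castSucc) + c) / N + (f (α (Fin.last m)) + c) / N
      ≤ ∑ k ∈ Finset.range m, (c - 1 + ((k + 1 : ℕ) : ℤ)) / N + (c - 1 + ((0:ℕ) : ℤ)) / N := by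
        rw [h3, h4] at *
        exact add_le_add le_rfl (by simpa using h2)
    _ = c - 1 := by simpa [hN] using hG
    _ < c := by omega

theorem stmt14 (n : ℕ) (hn : 2 ≤ n) (f : Fin n → ℤ) (α : Equiv.Perm (Fin n))
    (hα : ∀ i : Fin n, (i : ℕ) < n - 1 → f (α i) = ((i : ℕ) : ℤ)) :
    rankG (eK n) f =
      if f (α ⟨n - 1, by omega⟩) < 0 then -1 else f (α ⟨n - 1, by omega⟩) := by
  set t : ℤ := f (α ⟨n - 1, by omega⟩) with ht
  -- degree computation
  obtain ⟨m, hm⟩ : ∃ m, n = m + 1 := ⟨n - 1, by omega⟩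
  have hdeg : 2 * ∑ j, f j = ((n:ℤ) - 1) * ((n:ℤ) - 2) + 2 * t := by
    subst hm
    have hre : ∑ j, f j = ∑ i, f (α i) := (Equiv.sum_comp α f).symm
    rw [hre, Fin.sum_univ_castSucc]
    have h1 : ∀ i : Fin m, f (α i.castSucc) = ((i : ℕ) : ℤ) := by
      intro i
      exact hα i.castSucc (by have := i.isLt; simp only [Fin.coe_castSucc]; omega)
    have h2 : f (α (Fin.last m)) = t := by
      rw [ht]
      have he : (Fin.last m) = (⟨m + 1 - 1, by omega⟩ : Fin (m + 1)) := by
        apply Fin.ext; simp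
      rw [he]
    rw [Finset.sum_congr rfl fun i _ => h1 i, h2,
      Fin.sum_univ_eq_sum_range (fun k => ((k:ℕ):ℤ)) m]
    have gauss : (∑ c ∈ Finset.range m, (c:ℤ)) * 2 = (m:ℤ) * ((m:ℤ) - 1) := by
      rcases Nat.eq_zero_or_pos m with h | h
      · subst h; simp
      have h0 := congrArg (Nat.cast : ℕ → ℤ) (Finset.sum_range_id_mul_two m)
      push_cast [Nat.cast_sub (by omega : 1 ≤ m)] at h0
      convert h0 using 2
    push_cast
    nlinarith [gauss]
  set A : Set ℤ := {d : ℤ | ∃ lam : Fin n → ℤ,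
    (∀ i, 0 ≤ lam i) ∧ (∑ i, lam i) = d ∧ ¬ effG (eK n) (f - lam)} with hA
  by_cases htneg : t < 0
  · -- rank = -1
    have hleast : IsLeast A 0 := by
      constructor
      · refine ⟨0, fun i => le_rfl, by simp, ?_⟩
        rw [sub_zero]
        exact noneff hn f α hα (by omega)
      · rintro d ⟨lam, hlam, hd, -⟩
        rw [← hd]
        exact Finset.sum_nonneg fun i _ => hlam i
    rw [if_pos htneg]
    have : rankG (eK n) f = sInf A - 1 := rfl
    rw [this, hleast.csInf_eq]
    ring
  · push_neg at htneg
    rw [if_neg (not_lt.mpr htneg)]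
    have hleast : IsLeast A (t + 1) := by
      constructor
      · refine ⟨fun j => if j = α ⟨n - 1, by omega⟩ then t + 1 else 0, fun i => ?_, ?_, ?_⟩
        · dsimp only; split <;> omega
        · rw [Finset.sum_ite_eq']; simp
        · apply noneff hn _ α
          · intro i hi
            have hne : α i ≠ α ⟨n - 1, by omega⟩ := by
              intro hcon
              have := α.injective hcon
              rw [this] at hi
              simp at hi
            rw [Pi.sub_apply, hα i hi, if_neg hne, sub_zero]
          · rw [Pi.sub_apply, if_pos rfl, ← ht]; omega
      · rintro d ⟨lam, hlam, hd, hnoeff⟩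
        by_contra hlt
        push_neg at hlt
        apply hnoeff
        apply eff_of_deg hn
        have hsub : ∑ j, (f - lam) j = ∑ j, f j - d := by
          rw [← hd]
          simp [Finset.sum_sub_distrib]
        rw [hsub]
        omega
    have : rankG (eK n) f = sInf A - 1 := rfl
    rw [this, hleast.csInf_eq]
    ring
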